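/- Let L be a tree language recognized by some top-down residual finite tree automaton, and let A_can be the canonical top-down automaton of L defined below. Then: (i) for every state q of A_can, the state language of q in A_can equals its associated prime residual, L_q = c_q⁻¹L; (ii) L(A_can) = L, so A_can is a ↓-RFTA recognizing L; and (iii) every ↓-RFTA recognizing L has at least as many states as the number of prime top-down residuals of L, so A_can is a smallest ↓-RFTA recognizing L, unique up to renaming of states. -/

import Mathlib

/-- Terms over a ranked alphabet `F` with arity function `arity`. -/
inductive Term (F : Type) (arity : F → ℕ) : Type where
  | node (f : F) (children : Fin (arity f) → Term F arity) : Term F arity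

/-- Contexts: terms with exactly one occurrence of the hole `◇`. -/
inductive Ctx (F : Type) (arity : F → ℕ) : Type where
  | hole : Ctx F arity
  | node (f : F) (i : Fin (arity f)) (c : Ctx F arity)
      (sib : (j : Fin (arity f)) → j ≠ i → Term F arity) : Ctx F arity

/-- `c.fill t` replaces the hole of `c` by the term `t`. -/
def Ctx.fill {F : Type} {arity : F → ℕ} : Ctx F arity → Term F arity → Term F arity
  | .hole, t => t
  | .node f i c sib, t => .node f (fun j => if h : j = i then c.fill t else sib j h)

/-- Bottom-up residual of the tree language `L` w.r.t. the term `t`: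
the set of contexts `c` with `c[t] ∈ L`. -/
def bres {F : Type} {arity : F → ℕ} (L : Set (Term F arity)) (t : Term F arity) :
    Set (Ctx F arity) := {c | c.fill t ∈ L}

/-- Top-down residual of the tree language `L` w.r.t. the context `c`:
the set of terms `t` with `c[t] ∈ L`. -/
def tres {F : Type} {arity : F → ℕ} (L : Set (Term F arity)) (c : Ctx F arity) :
    Set (Term F arity) := {t | c.fill t ∈ L}

/-- Top-down finite tree automaton with state type `Q`:
initial states and a set of rules `q(f) → f(q₁,…,qₙ)`. -/
structure TDTA (F : Type) (arity : F → ℕ) (Q : Type) where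
  initial : Set Q
  rules : (f : F) → Q → (Fin (arity f) → Q) → Prop

/-- `A.Accepts q t`: the state `q` accepts the term `t`. -/
inductive TDTA.Accepts {F Q : Type} {arity : F → ℕ} (A : TDTA F arity Q) :
    Q → Term F arity → Prop
  | node {f : F} {q : Q} {qs : Fin (arity f) → Q} {ch : Fin (arity f) → Term F arity} :
      A.rules f q qs → (∀ i, A.Accepts (qs i) (ch i)) → A.Accepts q (.node f ch)

/-- State language `L_q`: the set of terms accepted by the state `q`. -/
def TDTA.stateLang {F Q : Type} {arity : F → ℕ} (A : TDTA F arity Q) (q : Q) :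
    Set (Term F arity) := {t | A.Accepts q t}

/-- Language recognized by a top-down tree automaton. -/
def TDTA.lang {F Q : Type} {arity : F → ℕ} (A : TDTA F arity Q) : Set (Term F arity) :=
  {t | ∃ q ∈ A.initial, A.Accepts q t}

/-- `A.CtxReach q c q'`: running from state `q` on the context `c`, the automaton can
label the hole position with `q'`, accepting every full subterm of `c` hanging off the
path to the hole from its assigned state. -/
inductive TDTA.CtxReach {F Q : Type} {arity : F → ℕ} (A : TDTA F arity Q) :
    Q → Ctx F arity → Q → Prop
  | hole (q : Q) : A.CtxReach q .hole q
  | node {f : F} {q : Q} {qs : Fin (arity f) → Q} {i : Fin (arity f)} {c : Ctx F arity}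
      {sib : (j : Fin (arity f)) → j ≠ i → Term F arity} {q' : Q} :
      A.rules f q qs → A.CtxReach (qs i) c q' →
      (∀ j (h : j ≠ i), A.Accepts (qs j) (sib j h)) →
      A.CtxReach q (.node f i c sib) q'

/-- `Q_c`: the set of states that `A` can reach at the hole position when running
from an initial state on the context `c`. -/
def TDTA.Qc {F Q : Type} {arity : F → ℕ} (A : TDTA F arity Q) (c : Ctx F arity) : Set Q :=
  {q | ∃ qi ∈ A.initial, A.CtxReach qi c q}

/-- Top-down residual finite tree automaton: each state language is a top-down
residual of `L(A)`. -/
def IsTDRFTA {F Q : Type} {arity : F → ℕ} (A : TDTA F arity Q) : Prop :=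
  ∀ q : Q, ∃ c : Ctx F arity, A.stateLang q = tres A.lang c

/-- A top-down residual is composite iff it is the union of the top-down residuals
of `L` that it strictly contains. -/
def IsCompositeTRes {F : Type} {arity : F → ℕ} (L : Set (Term F arity))
    (c : Ctx F arity) : Prop :=
  tres L c = ⋃ c' ∈ {c' : Ctx F arity | tres L c' ⊂ tres L c}, tres L c'

/-- A top-down residual is prime iff it is not composite. -/
def IsPrimeTRes {F : Type} {arity : F → ℕ} (L : Set (Term F arity))
    (c : Ctx F arity) : Prop := ¬ IsCompositeTRes L c

/-- The canonical top-down automaton of `L`, given a family `cq` of representative contexts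
(one per prime top-down residual of `L`): initial states are the `q` with `c_q⁻¹L ⊆ L`, and
the rules are the `q(f) → f(q₁,…,qₙ)` such that `c_q[f(t₁,…,tₙ)] ∈ L` whenever
`tᵢ ∈ c_{qᵢ}⁻¹L` for all `i`. -/
def canonTD {F : Type} {arity : F → ℕ} (L : Set (Term F arity)) {Q : Type}
    (cq : Q → Ctx F arity) : TDTA F arity Q where
  initial := {q | tres L (cq q) ⊆ L}
  rules f q qs := ∀ ts : Fin (arity f) → Term F arity,
    (∀ i, ts i ∈ tres L (cq (qs i))) → Ctx.fill (cq q) (.node f ts) ∈ L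

section Aux
variable {F Q : Type} {arity : F → ℕ}

lemma fill_accepts_iff (A : TDTA F arity Q) :
    ∀ (c : Ctx F arity) (q : Q) (t : Term F arity),
    A.Accepts q (c.fill t) ↔ ∃ q', A.CtxReach q c q' ∧ A.Accepts q' t := by
  intro c
  induction c with
  | hole =>
    intro q t
    constructor
    · intro h; exact ⟨q, .hole q, h⟩
    · rintro ⟨q', hr, ha⟩; cases hr; exact ha
  | node f i c sib ih =>
    intro q t
    constructor
    · intro h
      cases h with
      | @node _ _ qs _ hr hch =>
        have hi : A.Accepts (qs i) (c.fill t) := by simpa using hch i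
        obtain ⟨q', hcr, ha⟩ := (ih _ _).mp hi
        refine ⟨q', .node hr hcr ?_, ha⟩
        intro j hj
        simpa [hj] using hch j
    · rintro ⟨q', hr, ha⟩
      cases hr with
      | node hrule hcr hsib =>
        exact .node hrule (fun j => by
          by_cases hj : j = i
          · subst hj; rw [dif_pos rfl]; exact (ih _ _).mpr ⟨q', hcr, ha⟩
          · rw [dif_neg hj]; exact hsib j hj)

lemma mem_tres_lang_iff (A : TDTA F arity Q) (c : Ctx F arity) (t : Term F arity) :
    t ∈ tres A.lang c ↔ ∃ p ∈ A.Qc c, A.Accepts p t := by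
  constructor
  · rintro ⟨qi, hqi, hacc⟩
    obtain ⟨p, hr, ha⟩ := (fill_accepts_iff A c qi t).mp hacc
    exact ⟨p, ⟨qi, hqi, hr⟩, ha⟩
  · rintro ⟨p, ⟨qi, hqi, hr⟩, ha⟩
    exact ⟨qi, hqi, (fill_accepts_iff A c qi t).mpr ⟨p, hr, ha⟩⟩

lemma tres_lang_eq (A : TDTA F arity Q) (c : Ctx F arity) :
    tres A.lang c = ⋃ p ∈ A.Qc c, A.stateLang p := by
  ext t
  rw [mem_tres_lang_iff]
  simp [TDTA.stateLang]

lemma exists_state_eq (A : TDTA F arity Q) (hA : IsTDRFTA A) (c : Ctx F arity)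
    (hp : IsPrimeTRes A.lang c) : ∃ p : Q, A.stateLang p = tres A.lang c := by
  by_contra h
  push_neg at h
  apply hp
  apply Set.Subset.antisymm
  · intro t ht
    obtain ⟨p, hpQc, hacc⟩ := (mem_tres_lang_iff A c t).mp ht
    obtain ⟨c', hc'⟩ := hA p
    have hsub : A.stateLang p ⊆ tres A.lang c := by
      rw [tres_lang_eq]
      exact Set.subset_biUnion_of_mem hpQc
    refine Set.mem_biUnion (show tres A.lang c' ⊂ tres A.lang c from ?_) (hc' ▸ hacc)
    rw [← hc']
    exact hsub.ssubset_of_ne (h p)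
  · exact Set.iUnion₂_subset fun c' hc' => hc'.subset

lemma exists_prime_le [Fintype Q] (A : TDTA F arity Q) (hA : IsTDRFTA A)
    (c : Ctx F arity) (t : Term F arity) (ht : t ∈ tres A.lang c) :
    ∃ c', IsPrimeTRes A.lang c' ∧ tres A.lang c' ⊆ tres A.lang c ∧ t ∈ tres A.lang c' := by
  classical
  set Res : Set (Set (Term F arity)) :=
    {S | (∃ c0, S = tres A.lang c0) ∧ t ∈ S ∧ S ⊆ tres A.lang c} with hRes
  have hfin : Res.Finite := by
    have hsub : Res ⊆ Set.range (fun s : Set Q => ⋃ p ∈ s, A.stateLang p) := by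
      rintro S ⟨⟨c0, rfl⟩, -, -⟩
      exact ⟨A.Qc c0, (tres_lang_eq A c0).symm⟩
    exact (Set.finite_range _).subset hsub
  have hne : Res.Nonempty := ⟨tres A.lang c, ⟨c, rfl⟩, ht, subset_rfl⟩
  obtain ⟨M, hM, hmin0⟩ := hfin.exists_minimal hne
  have hmin : ∀ M' ∈ Res, id M' ≤ id M → id M = id M' :=
    fun M' h1 h2 => le_antisymm (hmin0 h1 h2) h2
  obtain ⟨⟨c0, rfl⟩, htM, hMc⟩ := hM
  refine ⟨c0, ?_, hMc, htM⟩
  intro hcomp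
  rw [IsCompositeTRes] at hcomp
  have ht0 : t ∈ ⋃ c' ∈ {c' : Ctx F arity | tres A.lang c' ⊂ tres A.lang c0}, tres A.lang c' :=
    hcomp ▸ htM
  obtain ⟨c1, hc1lt, htc1⟩ := by simpa using ht0
  have hc1mem : tres A.lang c1 ∈ Res :=
    ⟨⟨c1, rfl⟩, htc1, hc1lt.subset.trans hMc⟩
  have := hmin (tres A.lang c1) hc1mem hc1lt.subset
  exact hc1lt.ne' this

lemma canon_accepts_sub (L : Set (Term F arity)) (cq : Q → Ctx F arity) :
    ∀ (t : Term F arity) (q : Q), (canonTD L cq).Accepts q t → t ∈ tres L (cq q) := by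
  intro t q h
  induction h with
  | node hr _ ih => exact hr _ ih

lemma canon_accepts_sup {Q' : Type} [Fintype Q'] (cq : Q → Ctx F arity)
    (A : TDTA F arity Q') (hA : IsTDRFTA A)
    (hsurj : ∀ c, IsPrimeTRes A.lang c → ∃ q, tres A.lang (cq q) = tres A.lang c) :
    ∀ (t : Term F arity) (q : Q), t ∈ tres A.lang (cq q) → (canonTD A.lang cq).Accepts q t := by
  intro t
  induction t with
  | node f ch ih =>
    intro q ht
    obtain ⟨p, hpQc, hacc⟩ := (mem_tres_lang_iff A (cq q) _).mp ht
    cases hacc with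
    | @node _ _ ps _ hr hch =>
      have key : ∀ i, ∃ qi : Q, ch i ∈ tres A.lang (cq qi) ∧
          tres A.lang (cq qi) ⊆ A.stateLang (ps i) := by
        intro i
        obtain ⟨ci, hci⟩ := hA (ps i)
        have hchi : ch i ∈ tres A.lang ci := hci ▸ hch i
        obtain ⟨c'i, hprime', hsub', hmem'⟩ := exists_prime_le A hA ci (ch i) hchi
        obtain ⟨qi, hqi⟩ := hsurj c'i hprime'
        exact ⟨qi, hqi ▸ hmem', by rw [hqi, hci]; exact hsub'⟩
      choose qs hmem hsub using key
      have hrule : (canonTD A.lang cq).rules f q qs := by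
        intro ts hts
        have haccts : A.Accepts p (.node f ts) :=
          .node hr (fun i => hsub i (hts i))
        obtain ⟨qi, hqi, hreach⟩ := hpQc
        exact ⟨qi, hqi, (fill_accepts_iff A (cq q) qi _).mpr ⟨p, hreach, haccts⟩⟩
      exact .node hrule (fun i => ih i (qs i) (hmem i))

end Aux


/-- For a tree language `L` recognized by some ↓-RFTA, the canonical
top-down automaton `A_can` satisfies: (i) `L_q = c_q⁻¹L` for every state `q`;
(ii) `L(A_can) = L` and `A_can` is a ↓-RFTA; (iii) every ↓-RFTA recognizing `L` has at
least as many states as the number of prime top-down residuals of `L` (so `A_can` is a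
smallest ↓-RFTA recognizing `L`), and `A_can` is unique up to a renaming of its states. -/
theorem canonTD_spec {F Q : Type} [Fintype F] [Fintype Q] {arity : F → ℕ}
    (_hconst : ∃ a : F, arity a = 0) (L : Set (Term F arity))
    (hrec : ∃ (Q' : Type) (_ : Fintype Q') (A : TDTA F arity Q'), IsTDRFTA A ∧ A.lang = L)
    (cq : Q → Ctx F arity)
    (hprime : ∀ q, IsPrimeTRes L (cq q))
    (hinj : ∀ q q', tres L (cq q) = tres L (cq q') → q = q')
    (hsurj : ∀ c : Ctx F arity, IsPrimeTRes L c → ∃ q, tres L (cq q) = tres L c) :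
    (∀ q : Q, (canonTD L cq).stateLang q = tres L (cq q)) ∧
    (canonTD L cq).lang = L ∧
    IsTDRFTA (canonTD L cq) ∧
    (∀ (Q' : Type) [Fintype Q'], ∀ A' : TDTA F arity Q',
      IsTDRFTA A' → A'.lang = L → Fintype.card Q ≤ Fintype.card Q') ∧
    (∀ (Q' : Type) (cq' : Q' → Ctx F arity),
      (∀ q', IsPrimeTRes L (cq' q')) →
      (∀ q1 q2, tres L (cq' q1) = tres L (cq' q2) → q1 = q2) →
      (∀ c : Ctx F arity, IsPrimeTRes L c → ∃ q', tres L (cq' q') = tres L c) →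
      ∃ e : Q ≃ Q',
        (∀ q, q ∈ (canonTD L cq).initial ↔ e q ∈ (canonTD L cq').initial) ∧
        (∀ (f : F) (q : Q) (qs : Fin (arity f) → Q),
          (canonTD L cq).rules f q qs ↔ (canonTD L cq').rules f (e q) (e ∘ qs))) := by
  classical
  obtain ⟨Q'', instQ'', A, hA, hlang⟩ := hrec
  haveI := instQ''
  subst hlang
  have hhole : tres A.lang Ctx.hole = A.lang := by ext t; simp [tres, Ctx.fill]
  -- (i)
  have hi : ∀ q : Q, (canonTD A.lang cq).stateLang q = tres A.lang (cq q) := by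
    intro q
    ext t
    exact ⟨fun h => canon_accepts_sub _ _ t q h,
           fun h => canon_accepts_sup cq A hA hsurj t q h⟩
  -- (ii)
  have hlangEq : (canonTD A.lang cq).lang = A.lang := by
    apply Set.Subset.antisymm
    · rintro t ⟨q, hq, hacc⟩
      exact hq (canon_accepts_sub _ _ t q hacc)
    · intro t ht
      have ht' : t ∈ tres A.lang Ctx.hole := by rw [hhole]; exact ht
      obtain ⟨c', hp', hsub', hmem'⟩ := exists_prime_le A hA Ctx.hole t ht'
      obtain ⟨q, hq⟩ := hsurj c' hp'
      refine ⟨q, ?_, canon_accepts_sup cq A hA hsurj t q (by rw [hq]; exact hmem')⟩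
      show tres A.lang (cq q) ⊆ A.lang
      rw [hq, ← hhole]
      exact hsub'
  have hrfta : IsTDRFTA (canonTD A.lang cq) := fun q =>
    ⟨cq q, by rw [hi q, hlangEq]⟩
  -- (iii)
  have hcard : ∀ (Q' : Type) [Fintype Q'], ∀ A' : TDTA F arity Q',
      IsTDRFTA A' → A'.lang = A.lang → Fintype.card Q ≤ Fintype.card Q' := by
    intro Q' _ A' hA' hl'
    have key : ∀ q : Q, ∃ p : Q', A'.stateLang p = tres A.lang (cq q) := by
      intro q
      have hp : IsPrimeTRes A'.lang (cq q) := by rw [hl']; exact hprime q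
      obtain ⟨p, hp'⟩ := exists_state_eq A' hA' (cq q) hp
      exact ⟨p, by rw [hp', hl']⟩
    choose φ hφ using key
    exact Fintype.card_le_of_injective φ
      (fun q1 q2 h => hinj q1 q2 (by rw [← hφ q1, ← hφ q2, h]))
  refine ⟨hi, hlangEq, hrfta, hcard, ?_⟩
  -- (iv)
  intro Q' cq' hprime' hinj' hsurj'
  choose φ hφ using fun q => hsurj' (cq q) (hprime q)
  choose ψ hψ using fun q' => hsurj (cq' q') (hprime' q')
  have hli : Function.LeftInverse ψ φ := fun q => hinj _ _ (by rw [hψ (φ q), hφ q])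
  have hri : Function.RightInverse ψ φ := fun q' => hinj' _ _ (by rw [hφ (ψ q'), hψ q'])
  refine ⟨⟨φ, ψ, hli, hri⟩, ?_, ?_⟩
  · intro q
    show tres A.lang (cq q) ⊆ A.lang ↔ tres A.lang (cq' (φ q)) ⊆ A.lang
    rw [hφ q]
  · intro f q qs
    show ((canonTD A.lang cq).rules f q qs) ↔ ((canonTD A.lang cq').rules f (φ q) (φ ∘ qs))
    constructor
    · intro h ts hts
      show Term.node f ts ∈ tres A.lang (cq' (φ q))
      rw [hφ q]
      exact h ts (fun i => by rw [← hφ (qs i)]; exact hts i)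
    · intro h ts hts
      show Term.node f ts ∈ tres A.lang (cq q)
      rw [← hφ q]
      exact h ts (fun i => by show ts i ∈ tres A.lang (cq' (φ (qs i))); rw [hφ (qs i)]; exact hts i)
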